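/- Let c > 0. Then for every t ∈ ℝ, Σ'_{m ∈ ℤ} exp(−c·(t − m)²) ≥ Σ'_{m ∈ ℤ} exp(−c·(1/2 − m)²); that is, the 1-periodic function obtained by periodizing the Gaussian exp(−c·x²) attains its minimum at the half-integers, the points in the middle between two consecutive centers. -/

import Mathlib

open Real

namespace PGM


lemma gauss_term_le (b x : ℝ) (hb : 0 < b) (m : ℝ) :
    Real.exp (-b * (x - m)^2) ≤ Real.exp (b * x^2) * Real.exp (-(b/2) * m^2) := by
  rw [← Real.exp_add, Real.exp_le_exp]
  nlinarith [sq_nonneg (m - 2*x), sq_nonneg (x - m), sq_nonneg m, hb.le]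

lemma summable_geom_bound (C r : ℝ) (h0 : 0 ≤ r) (hr : r < 1) (w : ℕ → ℝ)
    (hw : ∀ n, |w n| ≤ C * r ^ n) : Summable w :=
  Summable.of_norm_bounded ((summable_geometric_of_lt_one h0 hr).mul_left C) hw

lemma summable_gauss_nat (b x : ℝ) (hb : 0 < b) :
    Summable (fun n : ℕ => Real.exp (-b * (x - n)^2)) := by
  apply summable_geom_bound (Real.exp (b * x^2)) (Real.exp (-(b/2))) (Real.exp_pos _).le
    (Real.exp_lt_one_iff.mpr (by linarith))
  intro n
  rw [abs_of_nonneg (Real.exp_pos _).le, ← Real.exp_nat_mul]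
  refine (gauss_term_le b x hb n).trans ?_
  apply mul_le_mul_of_nonneg_left _ (Real.exp_pos _).le
  rw [Real.exp_le_exp]
  have h1 : (n:ℝ) ≤ (n:ℝ)^2 := by exact_mod_cast Nat.le_self_pow two_ne_zero n
  nlinarith [hb.le]

lemma summable_gauss_int (b x : ℝ) (hb : 0 < b) :
    Summable (fun m : ℤ => Real.exp (-b * (x - m)^2)) := by
  apply Summable.of_nat_of_neg_add_one
  · exact_mod_cast summable_gauss_nat b x hb
  · have := summable_gauss_nat b (-x-1) hb
    apply this.congr
    intro n
    push_cast
    ring_nf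

lemma summable_gauss_int' (b : ℝ) (hb : 0 < b) :
    Summable (fun m : ℤ => Real.exp (-b * m^2)) := by
  have := summable_gauss_int b 0 hb
  apply this.congr
  intro m; ring_nf

lemma tsum_int_odd (f : ℤ → ℝ) (hf : ∀ n, f (-n) = - f n) : ∑' n : ℤ, f n = 0 := by
  have h := (Equiv.neg ℤ).tsum_eq f
  simp only [Equiv.neg_apply, hf] at h
  rw [tsum_neg] at h
  linarith

/-- Poisson summation for the periodized Gaussian, real form. -/
lemma poisson (c : ℝ) (hc : 0 < c) (x : ℝ) :
    ∑' m : ℤ, Real.exp (-c * (x - m)^2)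
      = (π/c) ^ ((1:ℝ)/2) * ∑' n : ℤ, Real.exp (-(π^2/c) * n^2) * Real.cos (2*π*n*x) := by
  have hπ : (0:ℝ) < π := Real.pi_pos
  have ha : (0:ℝ) < c / π := div_pos hc hπ
  -- the complex dual sum
  set S : ℂ := ∑' n : ℤ, (Real.exp (-(π^2/c) * n^2) : ℂ) * Complex.exp ((-(2*π*n*x) : ℝ) * Complex.I) with hS_def
  have hSsum : Summable (fun n : ℤ => (Real.exp (-(π^2/c) * n^2) : ℂ) * Complex.exp ((-(2*π*n*x) : ℝ) * Complex.I)) := by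
    apply Summable.of_norm
    have : ∀ n : ℤ, ‖(Real.exp (-(π^2/c) * n^2) : ℂ) * Complex.exp ((-(2*π*n*x) : ℝ) * Complex.I)‖
        = Real.exp (-(π^2/c) * n^2) := by
      intro n
      rw [norm_mul, Complex.norm_real, Complex.norm_exp_ofReal_mul_I,
        Real.norm_eq_abs, abs_of_nonneg (Real.exp_pos _).le, mul_one]
    simp_rw [this]
    exact summable_gauss_int' (π^2/c) (by positivity)
  -- S is real
  have hSre : S.re = ∑' n : ℤ, Real.exp (-(π^2/c) * n^2) * Real.cos (2*π*n*x) := by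
    rw [hS_def, Complex.re_tsum hSsum]
    apply tsum_congr
    intro n
    rw [Complex.re_ofReal_mul, Complex.exp_ofReal_mul_I_re, Real.cos_neg]
  have hSim : S.im = 0 := by
    rw [hS_def, Complex.im_tsum hSsum]
    apply tsum_int_odd
    intro n
    have h1 : ∀ m : ℤ, ((Real.exp (-(π^2/c) * m^2) : ℂ) * Complex.exp ((-(2*π*m*x) : ℝ) * Complex.I)).im
        = Real.exp (-(π^2/c) * m^2) * Real.sin (-(2*π*m*x)) := by
      intro m
      rw [Complex.im_ofReal_mul, Complex.exp_ofReal_mul_I_im]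
    rw [h1, h1]
    push_cast
    rw [neg_sq]
    rw [show -(2*π*(-(n:ℝ))*x) = -(-(2*π*n*x)) by ring, Real.sin_neg]
    ring
  have hSreal : S = (S.re : ℂ) := by
    apply Complex.ext
    · simp
    · simp [hSim]
  -- LHS factorization
  have h1 : ∀ m : ℤ, Real.exp (-c*(x - m)^2) = Real.exp (-c*x^2) * Real.exp (-c*m^2 + 2*c*x*m) := by
    intro m; rw [← Real.exp_add]; congr 1; ring
  have hLHS : ∑' m : ℤ, Real.exp (-c * (x - m)^2)
      = Real.exp (-c*x^2) * ∑' m : ℤ, Real.exp (-c*m^2 + 2*c*x*m) := by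
    rw [← tsum_mul_left]; exact tsum_congr h1
  set T : ℝ := ∑' m : ℤ, Real.exp (-c*m^2 + 2*c*x*m) with hT_def
  have hπ' : (π:ℂ) ≠ 0 := Complex.ofReal_ne_zero.mpr (ne_of_gt hπ)
  have hc' : (c:ℂ) ≠ 0 := Complex.ofReal_ne_zero.mpr (ne_of_gt hc)
  have ha' : (0:ℝ) < ((c/π : ℝ) : ℂ).re := by simpa using ha
  have key := Complex.tsum_exp_neg_quadratic ha' (((c*x/π : ℝ)) : ℂ)
  have hTc : (T : ℂ) = ∑' m : ℤ,
      Complex.exp (-(π:ℂ) * ((c/π : ℝ):ℂ) * (m:ℂ)^2 + 2*(π:ℂ) * ((c*x/π : ℝ):ℂ) * (m:ℂ)) := by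
    rw [hT_def, Complex.ofReal_tsum]
    apply tsum_congr
    intro m
    rw [Complex.ofReal_exp]
    congr 1
    push_cast
    field_simp
  have hterm : ∀ n : ℤ, Complex.exp (-(π:ℂ)/((c/π : ℝ):ℂ) * ((n:ℂ) + Complex.I*((c*x/π : ℝ):ℂ))^2)
      = ((Real.exp (c*x^2) : ℝ) : ℂ) * ((Real.exp (-(π^2/c) * n^2) : ℂ)
          * Complex.exp ((-(2*π*n*x) : ℝ) * Complex.I)) := by
    intro n
    rw [Complex.ofReal_exp, Complex.ofReal_exp, ← Complex.exp_add, ← Complex.exp_add]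
    congr 1
    push_cast
    field_simp
    ring_nf
    rw [Complex.I_sq]
    ring
  have hTc2 : (T : ℂ) = (1/((c/π : ℝ):ℂ) ^ ((1:ℂ)/2)) * (((Real.exp (c*x^2) : ℝ) : ℂ) * S) := by
    rw [hTc, key]
    congr 1
    rw [hS_def, ← tsum_mul_left]
    exact tsum_congr hterm
  have hconst : (1:ℂ)/((c/π : ℝ):ℂ) ^ ((1:ℂ)/2) = (((π/c) ^ ((1:ℝ)/2) : ℝ) : ℂ) := by
    have h2 : (((c/π) ^ ((1:ℝ)/2) : ℝ) : ℂ) = ((c/π : ℝ):ℂ) ^ ((1:ℂ)/2) := by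
      rw [Complex.ofReal_cpow ha.le]
      norm_num
    rw [← h2]
    have h3 : (π/c) ^ ((1:ℝ)/2) = ((c/π) ^ ((1:ℝ)/2))⁻¹ := by
      rw [show π/c = (c/π)⁻¹ by rw [inv_div], Real.inv_rpow ha.le]
    rw [h3]
    push_cast [Real.rpow_natCast]
    rw [one_div]
  have hTreal : T = (π/c) ^ ((1:ℝ)/2) * (Real.exp (c*x^2) * S.re) := by
    have := hTc2
    rw [hconst, hSreal] at this
    exact_mod_cast this
  rw [hLHS, hTreal, ← hSre]
  have hee : Real.exp (-c*x^2) * Real.exp (c*x^2) = 1 := by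
    rw [← Real.exp_add]; simp
  linear_combination ((π/c) ^ ((1:ℝ)/2) * S.re) * hee




lemma tsum_int_pair (f : ℤ → ℝ) (h0 : Summable (fun n : ℕ => f n))
    (h1 : Summable fun n : ℕ => f (-(n + 1))) :
    ∑' n : ℤ, f n = ∑' n : ℕ, (f n + f (-(n + 1))) := by
  rw [tsum_of_nat_of_neg_add_one h0 h1, ← Summable.tsum_add h0 h1]

lemma tsum_int_even (f : ℤ → ℝ) (hf : ∀ n, f (-n) = f n)
    (h1 : Summable (fun n : ℕ => f ((n : ℤ) + 1))) :
    ∑' n : ℤ, f n = f 0 + 2 * ∑' n : ℕ, f ((n : ℤ) + 1) := by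
  have h0 : Summable (fun n : ℕ => f n) := by
    have := (summable_nat_add_iff (f := fun n : ℕ => f n) 1).mp (by exact_mod_cast h1)
    exact this
  have h2 : Summable (fun n : ℕ => f (-(n + 1))) := by
    apply h1.congr; intro n; exact (hf _).symm
  rw [tsum_of_nat_of_neg_add_one h0 h2, Summable.tsum_eq_zero_add h0]
  have e2 : ∑' n : ℕ, f (-(n + 1)) = ∑' n : ℕ, f ((n : ℤ) + 1) := by
    apply tsum_congr; intro n; exact hf _
  have e3 : ∑' n : ℕ, f (((n : ℕ) + 1 : ℕ) : ℤ) = ∑' n : ℕ, f ((n : ℤ) + 1) := by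
    apply tsum_congr; intro n; push_cast; ring_nf
  push_cast at e3 ⊢
  rw [e2, e3]; ring

lemma abs_sin_nat_mul_le (x : ℝ) : ∀ n : ℕ, |Real.sin (n * x)| ≤ n * |Real.sin x| := by
  intro n
  induction n with
  | zero => simp
  | succ n ih =>
    have : ((n : ℝ) + 1) * x = n * x + x := by ring
    push_cast
    rw [this, Real.sin_add]
    calc |Real.sin (n*x) * Real.cos x + Real.cos (n*x) * Real.sin x|
        ≤ |Real.sin (n*x) * Real.cos x| + |Real.cos (n*x) * Real.sin x| := abs_add_le _ _
      _ ≤ |Real.sin (n*x)| * 1 + 1 * |Real.sin x| := by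
          rw [abs_mul, abs_mul]
          gcongr
          · exact Real.abs_cos_le_one x
          · exact Real.abs_cos_le_one _
      _ ≤ (n : ℝ) * |Real.sin x| + 1 * |Real.sin x| := by
          have := ih; nlinarith [abs_nonneg (Real.sin x)]
      _ = ((n : ℝ) + 1) * |Real.sin x| := by ring

lemma one_add_sq_half_le_cosh (x : ℝ) : 1 + x ^ 2 / 2 ≤ Real.cosh x := by
  have h1 : Real.cosh x = 2 * Real.sinh (x/2) ^ 2 + 1 := by
    have := Real.cosh_two_mul (x/2)
    have h2 := Real.cosh_sq (x/2)
    rw [show 2 * (x/2) = x by ring] at this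
    rw [this, h2]; ring
  have h3 : (x/2) ^ 2 ≤ Real.sinh (x/2) ^ 2 := by
    rcases le_total 0 (x/2) with h | h
    · have := Real.self_le_sinh_iff.mpr h
      nlinarith
    · have h4 : (-(x/2)) ≤ Real.sinh (-(x/2)) := Real.self_le_sinh_iff.mpr (by linarith)
      rw [Real.sinh_neg] at h4
      nlinarith
  nlinarith

lemma exp_le_two_cosh (x : ℝ) : Real.exp x ≤ 2 * Real.cosh x := by
  rw [Real.cosh_eq]
  have := (Real.exp_pos (-x)).le
  linarith

lemma cosh_ge_exp_sq (c v : ℝ) (hc : 4 ≤ c) (hv0 : 0 ≤ v) (hv : v ≤ 1/2) :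
    Real.exp (c * v ^ 2) ≤ Real.cosh (c * v) := by
  have hc0 : (0:ℝ) < c := by linarith
  have hl2 : (0:ℝ) < Real.log 2 := Real.log_pos (by norm_num)
  rcases le_total (c * v) (2 * Real.log 2) with h | h
  · -- small case
    have hy0 : 0 ≤ c * v ^ 2 := by positivity
    have hy : c * v ^ 2 ≤ Real.log 2 := by nlinarith
    have h2 : Real.exp (c * v ^ 2) ≤ 2 := by
      calc Real.exp (c * v^2) ≤ Real.exp (Real.log 2) := Real.exp_le_exp.mpr hy
        _ = 2 := Real.exp_log (by norm_num)
    have h3 : Real.exp (c * v ^ 2) ≤ 1 + (c * v ^ 2) * Real.exp (c * v ^ 2) := by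
      have ha := Real.add_one_le_exp (-(c * v ^ 2))
      have hE : (0:ℝ) < Real.exp (c * v ^ 2) := Real.exp_pos _
      have hmul : Real.exp (-(c * v ^ 2)) * Real.exp (c * v ^ 2) = 1 := by
        rw [← Real.exp_add]; simp
      nlinarith
    have h4 : Real.exp (c * v ^ 2) ≤ 1 + 2 * (c * v ^ 2) := by nlinarith
    have h5 : 1 + 2 * (c * v ^ 2) ≤ 1 + (c * v) ^ 2 / 2 := by nlinarith
    calc Real.exp (c * v^2) ≤ 1 + (c*v)^2/2 := by linarith
      _ ≤ Real.cosh (c * v) := one_add_sq_half_le_cosh _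
  · -- big case
    have key : c * v ^ 2 + Real.log 2 ≤ c * v := by nlinarith
    calc Real.exp (c * v ^ 2) = Real.exp (c * v ^ 2 + Real.log 2) / 2 := by
          rw [Real.exp_add, Real.exp_log (by norm_num : (0:ℝ) < 2)]; ring
      _ ≤ Real.exp (c * v) / 2 := by gcongr
      _ ≤ Real.cosh (c * v) := by have := exp_le_two_cosh (c * v); linarith





lemma pair_ineq (c v a : ℝ) (hc : 4 ≤ c) (hv : |v| ≤ 1/2) (ha : 1/2 ≤ a) :
    2 * Real.exp (-c * a^2) ≤ Real.exp (-c*(v - a)^2) + Real.exp (-c*(v + a)^2) := by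
  have hc0 : (0:ℝ) < c := by linarith
  have key : Real.exp (c * v^2) ≤ Real.cosh (2*c*a*v) := by
    have h1 : Real.exp (c * v^2) ≤ Real.cosh (c * |v|) := by
      have := cosh_ge_exp_sq c |v| hc (abs_nonneg v) hv
      rwa [sq_abs] at this
    refine h1.trans (Real.cosh_le_cosh.mpr ?_)
    have ha0 : (0:ℝ) < a := by linarith
    have e1 : |c * (|v| : ℝ)| = c * |v| := abs_of_nonneg (by positivity)
    have e2 : |2*c*a*v| = 2*c*a*|v| := by
      rw [show 2*c*a*v = (2*c*a)*v by ring, abs_mul, abs_of_nonneg (by positivity : (0:ℝ) ≤ 2*c*a)]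
    rw [e1, e2]
    have h5 : 0 ≤ (2*a - 1) * (c * |v|) := mul_nonneg (by linarith) (by positivity)
    nlinarith [h5]
  have expand : Real.exp (-c*(v - a)^2) + Real.exp (-c*(v + a)^2)
      = 2 * Real.exp (-c*(v^2 + a^2)) * Real.cosh (2*c*a*v) := by
    rw [Real.cosh_eq]
    rw [show (2:ℝ) * Real.exp (-c*(v^2+a^2)) * ((Real.exp (2*c*a*v) + Real.exp (-(2*c*a*v)))/2)
        = Real.exp (-c*(v^2+a^2)) * Real.exp (2*c*a*v) + Real.exp (-c*(v^2+a^2)) * Real.exp (-(2*c*a*v)) by ring]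
    rw [← Real.exp_add, ← Real.exp_add]
    congr 1 <;> congr 1 <;> ring
  rw [expand]
  have h2 : Real.exp (-c*a^2) = Real.exp (-c*(v^2 + a^2)) * Real.exp (c*v^2) := by
    rw [← Real.exp_add]; congr 1; ring
  rw [h2]
  have h3 : (0:ℝ) < Real.exp (-c*(v^2+a^2)) := Real.exp_pos _
  nlinarith [key]

lemma large_c (c : ℝ) (hc : 4 ≤ c) (t : ℝ) :
    ∑' m : ℤ, Real.exp (-c * (1 / 2 - (m : ℝ)) ^ 2) ≤
      ∑' m : ℤ, Real.exp (-c * (t - (m : ℝ)) ^ 2) := by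
  have hc0 : (0:ℝ) < c := by linarith
  set n₀ : ℤ := round (t + 1/2) with hn₀
  set v : ℝ := t + 1/2 - n₀ with hv_def
  have hv : |v| ≤ 1/2 := by rw [hv_def, hn₀]; exact abs_sub_round (t + 1/2)
  -- rewrite RHS
  have hFt : ∑' m : ℤ, Real.exp (-c * (t - (m:ℝ))^2) = ∑' m : ℤ, Real.exp (-c * ((v - 1/2) - (m:ℝ))^2) := by
    rw [← (Equiv.addRight n₀).tsum_eq (fun m : ℤ => Real.exp (-c * (t - (m:ℝ))^2))]
    apply tsum_congr
    intro m
    simp only [Equiv.coe_addRight]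
    congr 2
    push_cast
    rw [hv_def]
    ring
  -- rewrite LHS
  have hFh : ∑' m : ℤ, Real.exp (-c * ((1:ℝ)/2 - (m:ℝ))^2) = ∑' m : ℤ, Real.exp (-c * ((-1/2 : ℝ) - (m:ℝ))^2) := by
    rw [← (Equiv.neg ℤ).tsum_eq (fun m : ℤ => Real.exp (-c * ((1:ℝ)/2 - (m:ℝ))^2))]
    apply tsum_congr
    intro m
    simp only [Equiv.neg_apply]
    congr 1
    push_cast
    ring
  rw [hFt, hFh]
  set f : ℤ → ℝ := fun m => Real.exp (-c * ((v - 1/2) - (m:ℝ))^2) with hf_def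
  set g : ℤ → ℝ := fun m => Real.exp (-c * ((-1/2 : ℝ) - (m:ℝ))^2) with hg_def
  have hfs : Summable f := summable_gauss_int c (v - 1/2) hc0
  have hgs : Summable g := summable_gauss_int c (-1/2) hc0
  have hfs1 : Summable (fun n : ℕ => f n) := hfs.comp_injective (fun a b h => by exact_mod_cast h)
  have hfs2 : Summable (fun n : ℕ => f (-(n+1))) :=
    hfs.comp_injective (fun a b h => by simpa using h)
  have hgs1 : Summable (fun n : ℕ => g n) := hgs.comp_injective (fun a b h => by exact_mod_cast h)
  have hgs2 : Summable (fun n : ℕ => g (-(n+1))) :=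
    hgs.comp_injective (fun a b h => by simpa using h)
  rw [tsum_int_pair f hfs1 hfs2, tsum_int_pair g hgs1 hgs2]
  apply Summable.tsum_le_tsum _ (hgs1.add hgs2) (hfs1.add hfs2)
  intro n
  have ha : (1:ℝ)/2 ≤ (n:ℝ) + 1/2 := by
    have hn := Nat.cast_nonneg (α := ℝ) n
    linarith
  have key := pair_ineq c v ((n:ℝ) + 1/2) hc hv ha
  have e1 : g n + g (-(n+1)) = 2 * Real.exp (-c * ((n:ℝ) + 1/2)^2) := by
    rw [hg_def]
    simp only []
    push_cast
    rw [show (-1/2 - (n:ℝ))^2 = ((n:ℝ) + 1/2)^2 by ring,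
        show (-1/2 - (-((n:ℝ)+1)))^2 = ((n:ℝ) + 1/2)^2 by ring]
    ring
  have e2 : f n + f (-(n+1)) = Real.exp (-c*(v - ((n:ℝ)+1/2))^2) + Real.exp (-c*(v + ((n:ℝ)+1/2))^2) := by
    rw [hf_def]
    simp only []
    push_cast
    congr 2 <;> ring
  rw [e1, e2]
  exact key




lemma key_num (q : ℝ) (hq0 : 0 < q) (hq : q ≤ 1/2) (j : ℕ) :
    ((j:ℝ)+2)^2 * q^((j+2)^2) ≤ q * (1/2)^(j+1) := by
  have hq1 : q ≤ 1 := by linarith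
  have h2 : q^((j+2)^2) ≤ q * (q^3)^(j+1) := by
    rw [show (j+2)^2 = (1 + 3*(j+1)) + (j+1)*j by ring, pow_add, pow_add, pow_one, pow_mul]
    have hle : q^((j+1)*j) ≤ 1 := pow_le_one₀ hq0.le hq1
    have hpos : (0:ℝ) < q * (q^3)^(j+1) := by positivity
    nlinarith [hpos]
  have h3 : ((j:ℝ)+2)^2 ≤ 4^(j+1) := by
    have hn : (j+2) ≤ 2^(j+1) := by
      have := Nat.lt_two_pow_self (n := j+1)
      omega
    have hn' : ((j:ℝ)+2) ≤ 2^(j+1) := by exact_mod_cast hn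
    have h4 : ((2:ℝ)^(j+1))^2 = 4^(j+1) := by
      rw [← pow_mul, mul_comm, pow_mul]; norm_num
    rw [← h4]
    have h0 : (0:ℝ) ≤ (j:ℝ)+2 := by positivity
    nlinarith
  calc ((j:ℝ)+2)^2 * q^((j+2)^2) ≤ 4^(j+1) * (q * (q^3)^(j+1)) := by
        have e0 : (0:ℝ) ≤ ((j:ℝ)+2)^2 := by positivity
        have e1 : (0:ℝ) ≤ q^((j+2)^2) := by positivity
        nlinarith [pow_nonneg (by positivity : (0:ℝ) ≤ q*(q^3)^(j+1)) 1]
    _ = q * (4*q^3)^(j+1) := by rw [mul_pow]; ring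
    _ ≤ q * (1/2)^(j+1) := by
        have h5 : (0:ℝ) ≤ 4*q^3 := by positivity
        have h6 : 4*q^3 ≤ 1/2 := by nlinarith [pow_le_pow_left₀ hq0.le hq 3]
        exact mul_le_mul_of_nonneg_left (pow_le_pow_left₀ h5 h6 _) hq0.le

lemma cos_nat_pi (n : ℕ) : Real.cos (n * π) = (-1)^n := by
  induction n with
  | zero => simp
  | succ n ih =>
    push_cast
    rw [show ((n:ℝ)+1) * π = (n:ℝ)*π + π by ring, Real.cos_add_pi, ih]
    ring



lemma fourier_nat_summable (Q : ℝ) (hQ0 : 0 < Q) (w : ℕ → ℝ)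
    (hw : ∀ n, |w n| ≤ Real.exp (-Q * ((n:ℝ)+1)^2)) : Summable w := by
  apply summable_geom_bound (Real.exp (-Q)) (Real.exp (-Q)) (Real.exp_pos _).le
    (Real.exp_lt_one_iff.mpr (by linarith))
  intro n
  refine (hw n).trans ?_
  rw [← Real.exp_nat_mul, ← Real.exp_add, Real.exp_le_exp]
  have h1 : ((n:ℝ)+1) ≤ ((n:ℝ)+1)^2 := by nlinarith [Nat.cast_nonneg (α := ℝ) n]
  nlinarith [hQ0.le, Nat.cast_nonneg (α := ℝ) n]

lemma small_c (c : ℝ) (hc0 : 0 < c) (hc : c ≤ 4) (t : ℝ) :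
    ∑' m : ℤ, Real.exp (-c * (1 / 2 - (m : ℝ)) ^ 2) ≤
      ∑' m : ℤ, Real.exp (-c * (t - (m : ℝ)) ^ 2) := by
  have hπ := Real.pi_pos
  have hπ3 : (3:ℝ) < π := Real.pi_gt_three
  have hQ0 : (0:ℝ) < π^2/c := by positivity
  set Q : ℝ := π^2/c with hQ_def
  have hq0 : 0 < Real.exp (-Q) := Real.exp_pos _
  have hq : Real.exp (-Q) ≤ 1/2 := by
    have h9 : (2:ℝ) ≤ Q := by
      rw [hQ_def, le_div_iff₀ hc0]; nlinarith
    have h10 : Real.exp (-Q) ≤ Real.exp (-2) := Real.exp_le_exp.mpr (by linarith)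
    have h11 : Real.exp (-2) * Real.exp 2 = 1 := by rw [← Real.exp_add]; simp
    nlinarith [Real.add_one_le_exp 2, Real.exp_pos (-2)]
  have hpois1 := poisson c hc0 t
  have hpois2 := poisson c hc0 (1/2)
  rw [hpois1, hpois2, ← hQ_def]
  apply mul_le_mul_of_nonneg_left _ (Real.rpow_nonneg (by positivity) _)
  set g₁ : ℤ → ℝ := fun n => Real.exp (-Q * n^2) * Real.cos (2*π*n*t) with hg1
  set g₂ : ℤ → ℝ := fun n => Real.exp (-Q * n^2) * Real.cos (2*π*n*(1/2)) with hg2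
  have hg1even : ∀ n : ℤ, g₁ (-n) = g₁ n := by
    intro n; simp only [hg1]; push_cast
    rw [show 2*π*(-(n:ℝ))*t = -(2*π*n*t) by ring, Real.cos_neg, neg_sq]
  have hg2even : ∀ n : ℤ, g₂ (-n) = g₂ n := by
    intro n; simp only [hg2]; push_cast
    rw [show 2*π*(-(n:ℝ))*(1/2:ℝ) = -(2*π*n*(1/2)) by ring, Real.cos_neg, neg_sq]
  have habs : ∀ (x : ℝ) (n : ℕ), Real.exp (-Q * ((n:ℝ)+1)^2) * |Real.cos (2*π*((n:ℝ)+1)*x)|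
      ≤ Real.exp (-Q * ((n:ℝ)+1)^2) := fun x n =>
    (mul_le_mul_of_nonneg_left (Real.abs_cos_le_one _) (Real.exp_pos _).le).trans
      (le_of_eq (mul_one _))
  have hsum1 : Summable (fun n : ℕ => g₁ ((n:ℤ)+1)) := by
    apply fourier_nat_summable Q hQ0
    intro n
    simp only [hg1]
    push_cast
    rw [abs_mul, abs_of_nonneg (Real.exp_pos _).le]
    exact habs t n
  have hsum2 : Summable (fun n : ℕ => g₂ ((n:ℤ)+1)) := by
    apply fourier_nat_summable Q hQ0
    intro n
    simp only [hg2]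
    push_cast
    rw [abs_mul, abs_of_nonneg (Real.exp_pos _).le]
    exact habs (1/2) n
  rw [tsum_int_even g₁ hg1even hsum1, tsum_int_even g₂ hg2even hsum2]
  have h00 : g₁ 0 = g₂ 0 := by simp only [hg1, hg2]; norm_num
  have hmain : ∑' n : ℕ, g₂ ((n:ℤ)+1) ≤ ∑' n : ℕ, g₁ ((n:ℤ)+1) := by
    rw [← sub_nonneg, ← Summable.tsum_sub hsum1 hsum2]
    set d : ℕ → ℝ := fun n => g₁ ((n:ℤ)+1) - g₂ ((n:ℤ)+1) with hd_def
    have hsd : Summable d := hsum1.sub hsum2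
    have hdn : ∀ n : ℕ, d n
        = Real.exp (-Q*((n:ℝ)+1)^2) * (Real.cos (2*π*((n:ℝ)+1)*t) - (-1)^(n+1)) := by
      intro n
      simp only [hd_def, hg1, hg2]
      push_cast
      rw [show 2*π*((n:ℝ)+1)*(1/2:ℝ) = ((n+1:ℕ):ℝ)*π by push_cast; ring, cos_nat_pi]
      ring
    set A : ℝ := 2 * Real.exp (-Q) * Real.cos (π*t)^2 with hA_def
    have hA0 : 0 ≤ A := by positivity
    have hd0 : d 0 = A := by
      have h := hdn 0
      norm_num at h
      have hcsq := Real.cos_sq (π*t)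
      rw [show 2*(π*t) = 2*π*t by ring] at hcsq
      rw [h, hA_def]
      linear_combination (-2 * Real.exp (-Q)) * hcsq
    have htail : ∀ n : ℕ, -(A * (1/2)^(n+1)) ≤ d (n+1) := by
      intro n
      have hdn1 : d (n+1) = Real.exp (-Q*((n:ℝ)+2)^2) * (Real.cos (2*π*((n:ℝ)+2)*t) - (-1)^n) := by
        rw [hdn (n+1)]
        push_cast
        rw [show (n:ℝ)+1+1 = (n:ℝ)+2 by ring]
        congr 2
        rw [pow_succ, pow_succ]
        ring
      rcases Nat.even_or_odd n with hev | hod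
      · -- n even : k = n+2 even, (-1)^n = 1
        have hne : ((-1:ℝ))^n = 1 := hev.neg_one_pow
        obtain ⟨j, hj⟩ := hev
        have hs : Real.cos (2*π*((n:ℝ)+2)*t) = 1 - 2*Real.sin (π*((n:ℝ)+2)*t)^2 := by
          rw [show 2*π*((n:ℝ)+2)*t = 2*(π*((n:ℝ)+2)*t) by ring, Real.cos_two_mul,
            Real.cos_sq']
          ring
        have hjn : (n:ℝ) = 2*(j:ℝ) := by
          have h2 : n = 2*j := by omega
          exact_mod_cast h2
        have hsin1 : |Real.sin (π*((n:ℝ)+2)*t)| ≤ ((j:ℝ)+1) * |Real.sin (2*π*t)| := by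
          have := abs_sin_nat_mul_le (2*π*t) (j+1)
          push_cast at this
          rw [show π*((n:ℝ)+2)*t = ((j:ℝ)+1)*(2*π*t) by rw [hjn]; ring]
          exact this
        have hsin2 : |Real.sin (2*π*t)| ≤ 2 * |Real.cos (π*t)| := by
          rw [show 2*π*t = 2*(π*t) by ring, Real.sin_two_mul, abs_mul, abs_mul]
          norm_num
          nlinarith [abs_nonneg (Real.cos (π*t)), abs_nonneg (Real.sin (π*t)),
            Real.abs_sin_le_one (π*t), abs_nonneg (Real.sin (π*t))]
        have hsin : |Real.sin (π*((n:ℝ)+2)*t)| ≤ ((n:ℝ)+2) * |Real.cos (π*t)| := by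
          calc |Real.sin (π*((n:ℝ)+2)*t)| ≤ ((j:ℝ)+1) * |Real.sin (2*π*t)| := hsin1
            _ ≤ ((j:ℝ)+1) * (2*|Real.cos (π*t)|) :=
                mul_le_mul_of_nonneg_left hsin2 (by positivity)
            _ = ((n:ℝ)+2) * |Real.cos (π*t)| := by rw [hjn]; ring
        have hsq : Real.sin (π*((n:ℝ)+2)*t)^2 ≤ ((n:ℝ)+2)^2 * Real.cos (π*t)^2 := by
          have h1 := pow_le_pow_left₀ (abs_nonneg _) hsin 2
          rw [sq_abs] at h1
          calc Real.sin (π*((n:ℝ)+2)*t)^2 ≤ (((n:ℝ)+2) * |Real.cos (π*t)|)^2 := h1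
            _ = ((n:ℝ)+2)^2 * Real.cos (π*t)^2 := by rw [mul_pow, sq_abs]
        have hE : Real.exp (-Q*((n:ℝ)+2)^2) = Real.exp (-Q)^((n+2)^2) := by
          rw [← Real.exp_nat_mul, Real.exp_eq_exp]
          push_cast
          ring
        have hkey := key_num (Real.exp (-Q)) hq0 hq n
        rw [← hE] at hkey
        have hEpos : (0:ℝ) < Real.exp (-Q*((n:ℝ)+2)^2) := Real.exp_pos _
        have s1 : Real.exp (-Q*((n:ℝ)+2)^2) * Real.sin (π*((n:ℝ)+2)*t)^2
            ≤ Real.exp (-Q) * (1/2)^(n+1) * Real.cos (π*t)^2 := by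
          calc Real.exp (-Q*((n:ℝ)+2)^2) * Real.sin (π*((n:ℝ)+2)*t)^2
              ≤ Real.exp (-Q*((n:ℝ)+2)^2) * (((n:ℝ)+2)^2 * Real.cos (π*t)^2) :=
                mul_le_mul_of_nonneg_left hsq hEpos.le
            _ = (((n:ℝ)+2)^2 * Real.exp (-Q*((n:ℝ)+2)^2)) * Real.cos (π*t)^2 := by ring
            _ ≤ (Real.exp (-Q) * (1/2)^(n+1)) * Real.cos (π*t)^2 :=
                mul_le_mul_of_nonneg_right hkey (sq_nonneg _)
            _ = Real.exp (-Q) * (1/2)^(n+1) * Real.cos (π*t)^2 := by ring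
        rw [hdn1, hne, hs, hA_def]
        linarith only [s1]
      · -- n odd : (-1)^n = -1
        have hne : ((-1:ℝ))^n = -1 := Odd.neg_one_pow hod
        rw [hdn1, hne]
        have h1 : 0 ≤ Real.cos (2*π*((n:ℝ)+2)*t) - (-1) := by
          nlinarith [Real.neg_one_le_cos (2*π*((n:ℝ)+2)*t)]
        have h2 : 0 ≤ A * (1/2)^(n+1) := by positivity
        linarith only [h2, mul_nonneg (Real.exp_pos (-Q*((n:ℝ)+2)^2)).le h1]
    have hsd1 : Summable (fun n : ℕ => d (n+1)) := (summable_nat_add_iff 1).mpr hsd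
    have hgeo0 : Summable (fun n : ℕ => ((1:ℝ)/2)^(n+1)) :=
      (summable_nat_add_iff 1).mpr (summable_geometric_of_lt_one (by norm_num) (by norm_num))
    have hgeo : Summable (fun n : ℕ => -(A * (1/2)^(n+1))) := ((hgeo0.mul_left A).neg)
    have hlow := Summable.tsum_le_tsum htail hgeo hsd1
    have hgeosum : ∑' n : ℕ, ((1:ℝ)/2)^(n+1) = 1 := by
      simp_rw [pow_succ]
      rw [tsum_mul_right, tsum_geometric_two]
      norm_num
    have hAtsum : ∑' n : ℕ, -(A * (1/2)^(n+1)) = -A := by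
      rw [tsum_neg, tsum_mul_left, hgeosum, mul_one]
    rw [hAtsum] at hlow
    rw [Summable.tsum_eq_zero_add hsd, hd0]
    linarith
  linarith [hmain, h00]


end PGM

/-- The 1-periodization of the Gaussian `exp(-c x²)` attains its minimum at the
half-integers, the points in the middle between two consecutive centers:
for every `t`, `∑'_{m ∈ ℤ} exp(-c(t-m)²) ≥ ∑'_{m ∈ ℤ} exp(-c(1/2-m)²)`. -/
theorem periodized_gaussian_min_at_half (c : ℝ) (hc : 0 < c) :
    ∀ t : ℝ, ∑' m : ℤ, Real.exp (-c * (1 / 2 - (m : ℝ)) ^ 2) ≤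
      ∑' m : ℤ, Real.exp (-c * (t - (m : ℝ)) ^ 2) := by
  intro t
  rcases le_total c 4 with h | h
  · exact PGM.small_c c hc h t
  · exact PGM.large_c c h t
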